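/- arXiv:1011.6039 — 3 statements merged into one kernel-verified Lean document; each statement's English description precedes it below -/
import Mathlib

section
/- Suppose the transfer function φ is bounded and continuous. If k < k⁰, i.e. no θ ∈ Θ_k satisfies F_θ(x) = F_{θ⁰}(x) for λ_d-almost every x, then inf_{θ ∈ Θ_k} ∫_{ℝ^d} (F_θ(x) − F_{θ⁰}(x))² q(x) dx > 0. -/
open MeasureTheory ProbabilityTheory Filter

noncomputable section

/-- The parameter space of an MLP with `k` hidden units on inputs in `ℝ^d`:
`θ = (β, a, w)` with `β ∈ ℝ`, `a ∈ ℝ^k` and `w ∈ (ℝ^{d+1})^k`. -/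
abbrev Param (d k : ℕ) : Type := ℝ × (Fin k → ℝ) × (Fin k → (Fin (d + 1) → ℝ))

/-- `wᵀ x̃` where `x̃ = (1, x₁, …, x_d)`. -/
def dotT {d : ℕ} (w : Fin (d + 1) → ℝ) (x : Fin d → ℝ) : ℝ :=
  w 0 + ∑ a : Fin d, w a.succ * x a

/-- The MLP regression function `F_θ(x) = β + ∑ i, aᵢ φ(wᵢᵀ x̃)`. -/
def mlp {d k : ℕ} (φ : ℝ → ℝ) (θ : Param d k) (x : Fin d → ℝ) : ℝ :=
  θ.1 + ∑ i : Fin k, θ.2.1 i * φ (dotT (θ.2.2 i) x)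

/-- The compact parameter set `Θ_k`: `‖wᵢ‖ ≥ η`, `|aᵢ| ≥ η`, `‖θ‖ ≤ M`
(Euclidean norms, written via squares). -/
def Theta (d k : ℕ) (η M : ℝ) : Set (Param d k) :=
  {θ | (∀ i : Fin k, η ^ 2 ≤ ∑ a : Fin (d + 1), (θ.2.2 i a) ^ 2 ∧ η ≤ |θ.2.1 i|) ∧
    θ.1 ^ 2 + (∑ i : Fin k, (θ.2.1 i) ^ 2) +
      ∑ i : Fin k, ∑ a : Fin (d + 1), (θ.2.2 i a) ^ 2 ≤ M ^ 2}

/-- The density of `z = (x,y)` under parameter `θ` (Gaussian regression noise,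
input density `q`): `f_θ(z) = (2πσ²)^{-1/2} exp(-(y - F_θ(x))²/(2σ²)) q(x)`. -/
def fdens {d k : ℕ} (φ : ℝ → ℝ) (q : (Fin d → ℝ) → ℝ) (σ2 : ℝ) (θ : Param d k)
    (z : ((Fin d → ℝ) × ℝ)) : ℝ :=
  (Real.sqrt (2 * Real.pi * σ2))⁻¹ * Real.exp (-(z.2 - mlp φ θ z.1) ^ 2 / (2 * σ2)) * q z.1

/-- The law `q λ_d` of the inputs. -/
def muX (d : ℕ) (q : (Fin d → ℝ) → ℝ) : Measure (Fin d → ℝ) :=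
  volume.withDensity fun x => ENNReal.ofReal (q x)

/-- The law of `Z = (X,Y)` under the true parameter: density `f = f_{θ⁰}` w.r.t. `λ_{d+1}`. -/
def lawZ {d k0 : ℕ} (φ : ℝ → ℝ) (q : (Fin d → ℝ) → ℝ) (σ2 : ℝ) (θ0 : Param d k0) :
    Measure ((Fin d → ℝ) × ℝ) :=
  volume.withDensity fun z => ENNReal.ofReal (fdens φ q σ2 θ0 z)

/-- The linear combination of the functions appearing in assumption H-4:
`c·1 + ∑ᵢ (∑_{a≤b} γᵢab x_a x_b) φ''(wᵢ⁰ᵀx̃) + ∑ᵢ δᵢ φ''(wᵢ⁰ᵀx̃)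
 + ∑ᵢ (∑_a ζᵢa x_a) φ'(wᵢ⁰ᵀx̃) + ∑ᵢ εᵢ φ'(wᵢ⁰ᵀx̃) + ∑ᵢ αᵢ φ(wᵢ⁰ᵀx̃)`. -/
def combo {d k0 : ℕ} (φ : ℝ → ℝ) (w0 : Fin k0 → Fin (d + 1) → ℝ) (c : ℝ)
    (γ : Fin k0 → Fin d → Fin d → ℝ) (δ : Fin k0 → ℝ) (ζ : Fin k0 → Fin d → ℝ)
    (ε : Fin k0 → ℝ) (α : Fin k0 → ℝ) (x : Fin d → ℝ) : ℝ :=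
  c + (∑ i : Fin k0, (∑ a : Fin d, ∑ b : Fin d, if a ≤ b then γ i a b * x a * x b else 0) *
        deriv (deriv φ) (dotT (w0 i) x))
    + (∑ i : Fin k0, δ i * deriv (deriv φ) (dotT (w0 i) x))
    + (∑ i : Fin k0, (∑ a : Fin d, ζ i a * x a) * deriv φ (dotT (w0 i) x))
    + (∑ i : Fin k0, ε i * deriv φ (dotT (w0 i) x))
    + ∑ i : Fin k0, α i * φ (dotT (w0 i) x)



section Aux

lemma mlp_cont_x {d k : ℕ} (φ : ℝ → ℝ) (hφ : Continuous φ) (θ : Param d k) :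
    Continuous fun x => mlp φ θ x := by unfold mlp dotT; fun_prop

lemma mlp_cont_theta {d k : ℕ} (φ : ℝ → ℝ) (hφ : Continuous φ) (x : Fin d → ℝ) :
    Continuous fun θ : Param d k => mlp φ θ x := by unfold mlp dotT; fun_prop

lemma mlp_abs_le {d k : ℕ} (φ : ℝ → ℝ) {B C : ℝ} (hB : ∀ t, |φ t| ≤ B)
    {θ : Param d k} (hC1 : |θ.1| ≤ C) (hC2 : ∀ i, |θ.2.1 i| ≤ C) (x : Fin d → ℝ) :
    |mlp φ θ x| ≤ C * (1 + k * B) := by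
  have hC0 : 0 ≤ C := le_trans (abs_nonneg _) hC1
  have hB0 : 0 ≤ B := le_trans (abs_nonneg _) (hB 0)
  have h1 : |mlp φ θ x| ≤ |θ.1| + ∑ i : Fin k, |θ.2.1 i * φ (dotT (θ.2.2 i) x)| :=
    (abs_add_le _ _).trans (add_le_add_right (Finset.abs_sum_le_sum_abs _ _) _)
  have h2 : ∀ i : Fin k, |θ.2.1 i * φ (dotT (θ.2.2 i) x)| ≤ C * B := fun i => by
    rw [abs_mul]
    exact mul_le_mul (hC2 i) (hB _) (abs_nonneg _) hC0
  have h3 : (∑ i : Fin k, |θ.2.1 i * φ (dotT (θ.2.2 i) x)|) ≤ ∑ _i : Fin k, C * B :=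
    Finset.sum_le_sum fun i _ => h2 i
  simp only [Finset.sum_const, Finset.card_univ, Fintype.card_fin, nsmul_eq_mul] at h3
  calc |mlp φ θ x| ≤ |θ.1| + k * (C * B) := h1.trans (add_le_add_right h3 _)
    _ ≤ C + k * (C * B) := add_le_add_left hC1 _
    _ = C * (1 + k * B) := by ring

lemma theta_sum_nonneg {d k : ℕ} (θ : Param d k) :
    0 ≤ (∑ i : Fin k, (θ.2.1 i) ^ 2) ∧
    0 ≤ ∑ i : Fin k, ∑ a : Fin (d + 1), (θ.2.2 i a) ^ 2 :=
  ⟨Finset.sum_nonneg fun _ _ => sq_nonneg _,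
   Finset.sum_nonneg fun _ _ => Finset.sum_nonneg fun _ _ => sq_nonneg _⟩

lemma sq_to_abs {a M : ℝ} (hM : 0 ≤ M) (h : a ^ 2 ≤ M ^ 2) : |a| ≤ M := by
  have := Real.sqrt_le_sqrt h
  rwa [Real.sqrt_sq_eq_abs, Real.sqrt_sq hM] at this

lemma theta_bounds {d k : ℕ} {η M : ℝ} (hM : 0 ≤ M) {θ : Param d k}
    (hθ : θ ∈ Theta d k η M) : |θ.1| ≤ M ∧ ∀ i, |θ.2.1 i| ≤ M := by
  obtain ⟨h1, h2⟩ := theta_sum_nonneg θ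
  obtain ⟨-, hn⟩ := hθ
  constructor
  · exact sq_to_abs hM (by nlinarith)
  · intro i
    have : (θ.2.1 i) ^ 2 ≤ ∑ j : Fin k, (θ.2.1 j) ^ 2 :=
      Finset.single_le_sum (f := fun j => (θ.2.1 j) ^ 2) (fun j _ => sq_nonneg _)
        (Finset.mem_univ i)
    exact sq_to_abs hM (by nlinarith)

lemma theta_isCompact (d k : ℕ) (η M : ℝ) (hM : 0 ≤ M) : IsCompact (Theta d k η M) := by
  have hclosed : IsClosed (Theta d k η M) := by
    have h1 : IsClosed {θ : Param d k | ∀ i : Fin k,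
        η ^ 2 ≤ ∑ a : Fin (d + 1), (θ.2.2 i a) ^ 2 ∧ η ≤ |θ.2.1 i|} := by
      rw [Set.setOf_forall]
      refine isClosed_iInter fun i => ?_
      rw [Set.setOf_and]
      refine IsClosed.inter ?_ ?_
      · exact isClosed_le continuous_const (by fun_prop)
      · exact isClosed_le continuous_const (by fun_prop)
    have h2 : IsClosed {θ : Param d k | θ.1 ^ 2 + (∑ i : Fin k, (θ.2.1 i) ^ 2) +
        ∑ i : Fin k, ∑ a : Fin (d + 1), (θ.2.2 i a) ^ 2 ≤ M ^ 2} :=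
      isClosed_le (by fun_prop) continuous_const
    exact h1.inter h2
  have hsub : Theta d k η M ⊆ Metric.closedBall 0 M := by
    intro θ hθ
    obtain ⟨hb, ha⟩ := theta_bounds hM hθ
    simp only [Metric.mem_closedBall, dist_zero_right]
    rw [Prod.norm_def, Prod.norm_def]
    refine max_le (by simpa [Real.norm_eq_abs] using hb) (max_le ?_ ?_)
    · exact pi_norm_le_iff_of_nonneg hM |>.2 fun i => by simpa [Real.norm_eq_abs] using ha i
    · refine pi_norm_le_iff_of_nonneg hM |>.2 fun i => ?_
      refine pi_norm_le_iff_of_nonneg hM |>.2 fun a => ?_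
      have hn := hθ.2
      obtain ⟨h1, h2⟩ := theta_sum_nonneg θ
      have hs : (θ.2.2 i a) ^ 2 ≤ ∑ b : Fin (d+1), (θ.2.2 i b) ^ 2 :=
        Finset.single_le_sum (f := fun b => (θ.2.2 i b) ^ 2) (fun b _ => sq_nonneg _)
          (Finset.mem_univ a)
      have hs2 : (∑ b : Fin (d+1), (θ.2.2 i b) ^ 2) ≤
          ∑ j : Fin k, ∑ b : Fin (d+1), (θ.2.2 j b) ^ 2 :=
        Finset.single_le_sum (f := fun j => ∑ b : Fin (d+1), (θ.2.2 j b) ^ 2)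
          (fun j _ => Finset.sum_nonneg fun _ _ => sq_nonneg _) (Finset.mem_univ i)
      exact (by simpa [Real.norm_eq_abs] using sq_to_abs hM (by nlinarith) :
        ‖θ.2.2 i a‖ ≤ M)
  exact (isCompact_closedBall 0 M).of_isClosed_subset hclosed hsub

end Aux

/-- If `φ` is bounded and continuous and no parameter in `Θ_k` realizes the true regression
function `F_{θ⁰}` λ_d-almost everywhere (i.e. `k < k⁰`), then the `L²(qλ_d)` distance between
`F_θ` and `F_{θ⁰}` is bounded away from `0` on `Θ_k`. -/
theorem inf_L2_dist_pos (d k k0 : ℕ) (φ : ℝ → ℝ) (η M : ℝ) (hη : 0 < η) (hM : 0 < M)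
    (hφ_bdd : ∃ B, ∀ t, |φ t| ≤ B) (hφ_cont : Continuous φ)
    (q : (Fin d → ℝ) → ℝ) (hq_meas : Measurable q) (hq_pos : ∀ x, 0 < q x)
    (hq_one : ∫⁻ x, ENNReal.ofReal (q x) = 1)
    (θ0 : Param d k0) (hθ0 : θ0 ∈ Theta d k0 η M)
    (hk : ∀ θ ∈ Theta d k η M,
      ¬ (fun x => mlp φ θ x) =ᵐ[(volume : Measure (Fin d → ℝ))] fun x => mlp φ θ0 x) :
    ∃ c > 0, ∀ θ ∈ Theta d k η M,
      c ≤ ∫ x, (mlp φ θ x - mlp φ θ0 x) ^ 2 * q x := by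
  classical
  obtain ⟨B0, hB0⟩ := hφ_bdd
  set B := max B0 0 with hBdef
  have hB : ∀ t, |φ t| ≤ B := fun t => (hB0 t).trans (le_max_left _ _)
  have hBnn : (0:ℝ) ≤ B := le_max_right _ _
  have hq_nonneg : ∀ x, 0 ≤ q x := fun x => (hq_pos x).le
  have hq_int : Integrable q := by
    refine ⟨hq_meas.aestronglyMeasurable, ?_⟩
    rw [hasFiniteIntegral_iff_norm]
    calc ∫⁻ a, ENNReal.ofReal ‖q a‖ = ∫⁻ a, ENNReal.ofReal (q a) := by
          congr 1; ext a; rw [Real.norm_eq_abs, abs_of_nonneg (hq_nonneg a)]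
      _ = 1 := hq_one
      _ < ⊤ := by norm_num
  set C : ℝ := (M+1)*(1+k*B) + M*(1+k0*B) with hC
  set F : Param d k → (Fin d → ℝ) → ℝ := fun θ x => (mlp φ θ x - mlp φ θ0 x)^2 * q x
    with hF
  have hmlp0_bd : ∀ x, |mlp φ θ0 x| ≤ M*(1+k0*B) := fun x =>
    mlp_abs_le φ hB (theta_bounds hM.le hθ0).1 (theta_bounds hM.le hθ0).2 x
  have hFbound : ∀ θ : Param d k, |θ.1| ≤ M+1 → (∀ i, |θ.2.1 i| ≤ M+1) →
      ∀ x, ‖F θ x‖ ≤ C^2 * q x := by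
    intro θ h1 h2 x
    have hb : |mlp φ θ x - mlp φ θ0 x| ≤ C := by
      calc |mlp φ θ x - mlp φ θ0 x| ≤ |mlp φ θ x| + |mlp φ θ0 x| := abs_sub _ _
        _ ≤ (M+1)*(1+k*B) + M*(1+k0*B) :=
            add_le_add (mlp_abs_le φ hB h1 h2 x) (hmlp0_bd x)
    have hsq : (mlp φ θ x - mlp φ θ0 x)^2 ≤ C^2 := by
      rw [← sq_abs]
      exact pow_le_pow_left₀ (abs_nonneg _) hb 2
    have : ‖F θ x‖ = (mlp φ θ x - mlp φ θ0 x)^2 * q x := by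
      rw [hF]
      simp only [Real.norm_eq_abs]
      rw [abs_mul, abs_pow, sq_abs, abs_of_nonneg (hq_nonneg x)]
    rw [this]
    exact mul_le_mul_of_nonneg_right hsq (hq_nonneg x)
  have hbound_int : Integrable (fun x => C^2 * q x) := hq_int.const_mul _
  have hFmeas : ∀ θ : Param d k, AEStronglyMeasurable (F θ) volume := fun θ =>
    ((((mlp_cont_x φ hφ_cont θ).sub (mlp_cont_x φ hφ_cont θ0)).pow 2).aestronglyMeasurable.mul
      hq_meas.aestronglyMeasurable)
  have hFcont : ∀ x, Continuous fun θ : Param d k => F θ x := fun x =>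
    (((mlp_cont_theta φ hφ_cont x).sub continuous_const).pow 2).mul continuous_const
  set G : Param d k → ℝ := fun θ => ∫ x, F θ x with hG
  set U : Set (Param d k) :=
    {θ | |θ.1| < M+1} ∩ ⋂ i : Fin k, {θ : Param d k | |θ.2.1 i| < M+1} with hU
  have hUopen : IsOpen U := by
    refine IsOpen.inter ?_ (isOpen_iInter_of_finite fun i => ?_)
    · exact isOpen_lt (by fun_prop) continuous_const
    · exact isOpen_lt (by fun_prop) continuous_const
  have hUsub : Theta d k η M ⊆ U := by
    intro θ hθ
    obtain ⟨h1, h2⟩ := theta_bounds hM.le hθ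
    exact ⟨lt_of_le_of_lt h1 (lt_add_one M),
      Set.mem_iInter.2 fun i => lt_of_le_of_lt (h2 i) (lt_add_one M)⟩
  have hUbd : ∀ θ ∈ U, ∀ x, ‖F θ x‖ ≤ C^2 * q x := by
    intro θ hθ x
    exact hFbound θ hθ.1.le (fun i => (Set.mem_iInter.1 hθ.2 i).le) x
  have hGcont : ContinuousOn G (Theta d k η M) := by
    intro θ hθ
    refine (continuousAt_of_dominated ?_ ?_ hbound_int ?_).continuousWithinAt
    · exact Eventually.of_forall fun θ' => hFmeas θ'
    · filter_upwards [hUopen.mem_nhds (hUsub hθ)] with θ' hθ'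
      exact Eventually.of_forall fun x => hUbd θ' hθ' x
    · exact Eventually.of_forall fun x => (hFcont x).continuousAt
  have hGpos : ∀ θ ∈ Theta d k η M, 0 < G θ := by
    intro θ hθ
    have hint : Integrable (F θ) :=
      hbound_int.mono' (hFmeas θ) (Eventually.of_forall fun x => hUbd θ (hUsub hθ) x)
    have hnn : 0 ≤ F θ := fun x => mul_nonneg (sq_nonneg _) (hq_nonneg x)
    rw [hG]
    rw [integral_pos_iff_support_of_nonneg hnn hint]
    have hne := hk θ hθ
    have hSsub : {x | mlp φ θ x ≠ mlp φ θ0 x} ⊆ Function.support (F θ) := by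
      intro x hx
      have : mlp φ θ x - mlp φ θ0 x ≠ 0 := sub_ne_zero_of_ne hx
      exact mul_ne_zero (pow_ne_zero _ this) (hq_pos x).ne'
    have hSpos : 0 < volume {x | mlp φ θ x ≠ mlp φ θ0 x} := by
      rw [pos_iff_ne_zero]
      intro h0
      exact hne (by rwa [EventuallyEq, ae_iff])
    exact lt_of_lt_of_le hSpos (measure_mono hSsub)
  rcases Set.eq_empty_or_nonempty (Theta d k η M) with hemp | hne
  · exact ⟨1, one_pos, fun θ hθ => absurd hθ (by simp [hemp])⟩
  · obtain ⟨θm, hθm, hmin⟩ := (theta_isCompact d k η M hM.le).exists_isMinOn hne hGcont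
    exact ⟨G θm, hGpos θm hθm, fun θ hθ => hmin hθ⟩

end
end

section
/- Let μ be a measure, and let f and g be probability densities with respect to μ with f > 0 and g > 0 everywhere, such that g/f − 1 is a nonzero element of L²(f μ). Let s = (g/f − 1)/‖g/f − 1‖₂ where ‖·‖₂ is the L²(f μ) norm, and let s be given by a fixed pointwise representative. Then for any points z₁, …, z_n with Σ_{i=1}^n (min(s(zᵢ), 0))² > 0, the likelihood ratio inequality holds: Σ_{i=1}^n (log g(zᵢ) − log f(zᵢ)) ≤ (Σ_{i=1}^n s(zᵢ))² / (2 Σ_{i=1}^n (min(s(zᵢ), 0))²). -/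
open MeasureTheory

lemma log_one_add_le_aux {y : ℝ} (hy : -1 < y) :
    Real.log (1 + y) ≤ y - (min y 0) ^ 2 / 2 := by
  rcases le_or_gt 0 y with h0 | h0
  · rw [min_eq_right h0]
    have := Real.log_le_sub_one_of_pos (x := 1 + y) (by linarith)
    simpa using this
  · rw [min_eq_left h0.le]
    -- show log (1+y) ≤ y - y^2/2 for -1 < y < 0 via antitone F t = t - t^2/2 - log(1+t)
    set F : ℝ → ℝ := fun t => t - t ^ 2 / 2 - Real.log (1 + t) with hF
    have key : AntitoneOn F (Set.Icc y 0) := by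
      have hderiv : ∀ t ∈ interior (Set.Icc y 0), HasDerivAt F (1 - t - 1 / (1 + t)) t := by
        intro t ht
        rw [interior_Icc] at ht
        have ht1 : (0:ℝ) < 1 + t := by have := ht.1; linarith
        have h1 : HasDerivAt (fun u : ℝ => 1 + u) 1 t := by
          simpa using (hasDerivAt_id t).const_add 1
        have hlog : HasDerivAt (fun u : ℝ => Real.log (1 + u)) (1 / (1 + t)) t := by
          simpa using (h1.log ht1.ne')
        have hpoly : HasDerivAt (fun u : ℝ => u - u ^ 2 / 2) (1 - t) t := by
          have h2 : HasDerivAt (fun u : ℝ => u ^ 2 / 2) t t := by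
            have := (hasDerivAt_pow 2 t).div_const 2
            simpa [mul_comm] using this
          exact (hasDerivAt_id' t).sub h2
        exact hpoly.sub hlog
      apply antitoneOn_of_deriv_nonpos (convex_Icc y 0)
      · apply ContinuousOn.sub (by fun_prop)
        apply ContinuousOn.log (by fun_prop)
        intro t ht
        have := ht.1
        have : (0:ℝ) < 1 + t := by linarith
        linarith
      · intro t ht
        exact (hderiv t ht).differentiableAt.differentiableWithinAt
      · intro t ht
        rw [(hderiv t ht).deriv]
        rw [interior_Icc] at ht
        have ht1 : (0:ℝ) < 1 + t := by have := ht.1; linarith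
        rw [sub_nonpos, le_div_iff₀ ht1]
        nlinarith [sq_nonneg t]
    have h1 : F 0 ≤ F y := key (Set.mem_Icc.mpr ⟨le_refl y, h0.le⟩)
      (Set.mem_Icc.mpr ⟨h0.le, le_refl 0⟩) h0.le
    simp only [hF] at h1
    simp at h1
    linarith

/-- Gassiat's deterministic likelihood-ratio inequality.  If `f` and `g` are everywhere
positive probability densities with respect to `μ`, `g/f - 1` is a nonzero element of
`L²(fμ)`, and `s = (g/f - 1)/‖g/f - 1‖₂` is its normalization (given by this fixed pointwise
representative), then for any sample points `z₁, …, z_n` with `∑ (min (s zᵢ) 0)² > 0`,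
`∑ (log g(zᵢ) - log f(zᵢ)) ≤ (∑ s(zᵢ))² / (2 ∑ (min (s zᵢ) 0)²)`. -/
theorem likelihood_ratio_inequality {α : Type*} [MeasurableSpace α] (μ : Measure α)
    (f g : α → ℝ) (hf_meas : Measurable f) (hg_meas : Measurable g)
    (hf_pos : ∀ z, 0 < f z) (hg_pos : ∀ z, 0 < g z)
    (hf_one : ∫⁻ z, ENNReal.ofReal (f z) ∂μ = 1)
    (hg_one : ∫⁻ z, ENNReal.ofReal (g z) ∂μ = 1)
    (hL2 : MemLp (fun z => g z / f z - 1) 2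
      (μ.withDensity fun z => ENNReal.ofReal (f z)))
    (hne : ¬ (fun z => g z / f z - 1) =ᵐ[μ.withDensity fun z => ENNReal.ofReal (f z)]
      (fun _ => (0 : ℝ)))
    (s : α → ℝ)
    (hs : s = fun z => (g z / f z - 1) /
      Real.sqrt (∫ t, (g t / f t - 1) ^ 2 ∂(μ.withDensity fun t => ENNReal.ofReal (f t))))
    (n : ℕ) (z : Fin n → α)
    (hpos : 0 < ∑ i : Fin n, (min (s (z i)) 0) ^ 2) :
    ∑ i : Fin n, (Real.log (g (z i)) - Real.log (f (z i))) ≤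
      (∑ i : Fin n, s (z i)) ^ 2 / (2 * ∑ i : Fin n, (min (s (z i)) 0) ^ 2) := by
  set c : ℝ := Real.sqrt (∫ t, (g t / f t - 1) ^ 2
      ∂(μ.withDensity fun t => ENNReal.ofReal (f t))) with hc
  have hsz : ∀ x, s x = (g x / f x - 1) / c := by intro x; simp only [hs]
  have hc0 : 0 ≤ c := Real.sqrt_nonneg _
  rcases eq_or_lt_of_le hc0 with hc0' | hcpos
  · exfalso
    have : ∀ i : Fin n, (min (s (z i)) 0) ^ 2 = 0 := by
      intro i; rw [hsz, ← hc0']; simp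
    simp only [this, Finset.sum_const_zero] at hpos
    exact lt_irrefl 0 hpos
  -- c > 0
  have hgf : ∀ x, g x / f x = 1 + c * s x := by
    intro x
    rw [hsz]
    field_simp
    ring
  have hmin : ∀ x, (min (c * s x) 0) ^ 2 = c ^ 2 * (min (s x) 0) ^ 2 := by
    intro x
    rcases le_total (s x) 0 with h | h
    · rw [min_eq_left (mul_nonpos_of_nonneg_of_nonpos hcpos.le h), min_eq_left h, mul_pow]
    · rw [min_eq_right (mul_nonneg hcpos.le h), min_eq_right h]
      ring
  have hpt : ∀ i : Fin n, Real.log (g (z i)) - Real.log (f (z i)) ≤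
      c * s (z i) - c ^ 2 * (min (s (z i)) 0) ^ 2 / 2 := by
    intro i
    have h1 : Real.log (g (z i)) - Real.log (f (z i)) = Real.log (1 + c * s (z i)) := by
      rw [← Real.log_div (hg_pos _).ne' (hf_pos _).ne', hgf]
    have h2 : -1 < c * s (z i) := by
      have hq : 0 < g (z i) / f (z i) := div_pos (hg_pos _) (hf_pos _)
      rw [hgf] at hq; linarith
    have h3 := log_one_add_le_aux h2
    rw [h1, ← hmin]
    linarith
  have hsum := Finset.sum_le_sum (fun i (_ : i ∈ Finset.univ) => hpt i)
  set S := ∑ i : Fin n, s (z i) with hS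
  set Q := ∑ i : Fin n, (min (s (z i)) 0) ^ 2 with hQ
  have hrhs : ∑ i : Fin n, (c * s (z i) - c ^ 2 * (min (s (z i)) 0) ^ 2 / 2)
      = c * S - c ^ 2 * Q / 2 := by
    rw [Finset.sum_sub_distrib, ← Finset.mul_sum, ← Finset.sum_div, ← Finset.mul_sum]
  rw [hrhs] at hsum
  refine hsum.trans ?_
  rw [le_div_iff₀ (by positivity : (0:ℝ) < 2 * Q)]
  nlinarith [sq_nonneg (S - c * Q)]
end

section
/- Let σ(z) = 1/(1 + e^{−z}) be the complex sigmoid function. Let m₁, …, m_k ∈ ℂ \ {0} and b₁, …, b_k ∈ ℂ, set Sᵢ = { ((2n+1)π√(−1) − bᵢ)/mᵢ : n ∈ ℤ }, and assume the sets S₁, …, S_k are pairwise disjoint. Let D = ℂ \ (S₁ ∪ … ∪ S_k). If complex numbers α₀, αᵢ, εᵢ, βᵢ, δᵢ, γᵢ (1 ≤ i ≤ k) satisfy α₀ + Σ_{i=1}^k αᵢ σ(mᵢu + bᵢ) + Σ_{i=1}^k (εᵢ + βᵢ u) σ'(mᵢu + bᵢ) + Σ_{i=1}^k (δᵢ + γᵢ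 u²) σ''(mᵢu + bᵢ) = 0 for every u ∈ D, then α₀ = 0 and αᵢ = εᵢ = βᵢ = δᵢ = γᵢ = 0 for all 1 ≤ i ≤ k. -/
noncomputable section

/-- The complex sigmoid function `σ(z) = 1/(1 + e^{-z})`. -/
def csigmoid (z : ℂ) : ℂ := (1 + Complex.exp (-z))⁻¹

open Complex Filter Topology

private def sig1 (z : ℂ) : ℂ := Complex.exp (-z) / (1 + Complex.exp (-z)) ^ 2
private def sig2 (z : ℂ) : ℂ :=
  Complex.exp (-z) * (Complex.exp (-z) - 1) / (1 + Complex.exp (-z)) ^ 3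

private lemma exp_neg_eq_neg_one_iff (z : ℂ) :
    Complex.exp (-z) = -1 ↔ ∃ n : ℤ, z = (2 * (n : ℂ) + 1) * Real.pi * Complex.I := by
  rw [show (-1 : ℂ) = Complex.exp (Real.pi * Complex.I) from (Complex.exp_pi_mul_I).symm,
    Complex.exp_eq_exp_iff_exists_int]
  constructor
  · rintro ⟨n, hn⟩
    exact ⟨-n - 1, by push_cast; linear_combination -hn⟩
  · rintro ⟨n, hn⟩
    exact ⟨-n - 1, by push_cast; linear_combination -hn⟩

private lemma pole_dist {z q : ℂ} (hz : Complex.exp (-z) = -1) (hq : Complex.exp (-q) = -1)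
    (hne : z ≠ q) : 2 * Real.pi ≤ dist z q := by
  obtain ⟨n, rfl⟩ := (exp_neg_eq_neg_one_iff z).mp hz
  obtain ⟨n', rfl⟩ := (exp_neg_eq_neg_one_iff q).mp hq
  have hnn : n ≠ n' := by rintro rfl; exact hne rfl
  have h1 : (1 : ℝ) ≤ |((n - n' : ℤ) : ℝ)| := by
    exact_mod_cast Int.one_le_abs (sub_ne_zero.mpr hnn)
  rw [Complex.dist_eq]
  have e : (2 * (n : ℂ) + 1) * Real.pi * Complex.I - (2 * (n' : ℂ) + 1) * Real.pi * Complex.I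
      = (((n - n' : ℤ) : ℝ) : ℂ) * ((2 * Real.pi : ℝ) : ℂ) * Complex.I := by
    push_cast; ring
  rw [e, norm_mul, norm_mul, Complex.norm_I, mul_one, Complex.norm_real, Complex.norm_real,
    Real.norm_eq_abs, Real.norm_eq_abs]
  have hpi := Real.pi_pos
  rw [_root_.abs_of_nonneg (by positivity : (0:ℝ) ≤ 2 * Real.pi)]
  nlinarith

private lemma hasDerivAt_one_add_exp_neg (z : ℂ) :
    HasDerivAt (fun w : ℂ => 1 + Complex.exp (-w)) (Complex.exp (-z) * -1) z :=
  (((hasDerivAt_id z).neg).cexp).const_add 1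

private lemma hasDerivAt_csigmoid {z : ℂ} (h : 1 + Complex.exp (-z) ≠ 0) :
    HasDerivAt csigmoid (sig1 z) z := by
  have h2 := (hasDerivAt_one_add_exp_neg z).inv h
  have hval : -(Complex.exp (-z) * -1) / (1 + Complex.exp (-z)) ^ 2 = sig1 z := by
    simp [sig1]
  exact hval ▸ h2

private lemma hasDerivAt_sig1 {z : ℂ} (h : 1 + Complex.exp (-z) ≠ 0) :
    HasDerivAt sig1 (sig2 z) z := by
  have hE : HasDerivAt (fun w : ℂ => Complex.exp (-w)) (Complex.exp (-z) * -1) z :=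
    ((hasDerivAt_id z).neg).cexp
  have hden : HasDerivAt (fun w : ℂ => (1 + Complex.exp (-w)) ^ 2)
      ((2 : ℕ) * (1 + Complex.exp (-z)) ^ 1 * (Complex.exp (-z) * -1)) z :=
    (hasDerivAt_one_add_exp_neg z).pow 2
  have h2 := hE.div hden (pow_ne_zero 2 h)
  have hval : (Complex.exp (-z) * -1 * (1 + Complex.exp (-z)) ^ 2 -
      Complex.exp (-z) * ((2 : ℕ) * (1 + Complex.exp (-z)) ^ 1 * (Complex.exp (-z) * -1))) /
      ((1 + Complex.exp (-z)) ^ 2) ^ 2 = sig2 z := by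
    rw [sig2]
    field_simp
    ring
  exact hval ▸ h2

private lemma isOpen_good : IsOpen {z : ℂ | 1 + Complex.exp (-z) ≠ 0} := by
  have hc : Continuous fun z : ℂ => 1 + Complex.exp (-z) := by continuity
  exact isOpen_compl_singleton.preimage hc

private lemma deriv_csigmoid_eq {z : ℂ} (h : 1 + Complex.exp (-z) ≠ 0) :
    deriv csigmoid z = sig1 z := (hasDerivAt_csigmoid h).deriv

private lemma deriv2_csigmoid_eq {z : ℂ} (h : 1 + Complex.exp (-z) ≠ 0) :
    deriv (deriv csigmoid) z = sig2 z := by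
  have hev : deriv csigmoid =ᶠ[𝓝 z] sig1 := by
    filter_upwards [isOpen_good.mem_nhds h] with w hw using deriv_csigmoid_eq hw
  rw [hev.deriv_eq]
  exact (hasDerivAt_sig1 h).deriv

private lemma continuousAt_csigmoid {z : ℂ} (h : 1 + Complex.exp (-z) ≠ 0) :
    ContinuousAt csigmoid z := (hasDerivAt_csigmoid h).differentiableAt.continuousAt

private lemma continuousAt_sig1 {z : ℂ} (h : 1 + Complex.exp (-z) ≠ 0) :
    ContinuousAt sig1 z := (hasDerivAt_sig1 h).differentiableAt.continuousAt

private lemma continuousAt_sig2 {z : ℂ} (h : 1 + Complex.exp (-z) ≠ 0) :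
    ContinuousAt sig2 z := by
  show ContinuousAt (fun z : ℂ =>
    Complex.exp (-z) * (Complex.exp (-z) - 1) / (1 + Complex.exp (-z)) ^ 3) z
  apply ContinuousAt.div
  · fun_prop
  · fun_prop
  · exact pow_ne_zero 3 h



private lemma tendsto_slope_inv {q : ℂ} (hq : Complex.exp (-q) = -1) :
    Tendsto (fun z => (z - q) / (1 + Complex.exp (-z))) (𝓝[≠] q) (𝓝 1) := by
  have h1 := hasDerivAt_one_add_exp_neg q
  rw [hasDerivAt_iff_tendsto_slope] at h1
  have hval : Complex.exp (-q) * -1 = 1 := by rw [hq]; ring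
  rw [hval] at h1
  have h2 : Tendsto (fun z => (1 + Complex.exp (-z)) / (z - q)) (𝓝[≠] q) (𝓝 1) := by
    refine h1.congr fun z => ?_
    rw [slope_def_field, hq]
    ring
  have h3 := h2.inv₀ one_ne_zero
  rw [inv_one] at h3
  exact h3.congr fun z => by rw [inv_div]

private lemma tendsto_pole1 {q : ℂ} (hq : Complex.exp (-q) = -1) :
    Tendsto (fun z => (z - q) ^ 1 * csigmoid z) (𝓝[≠] q) (𝓝 1) :=
  (tendsto_slope_inv hq).congr fun z => by
    rw [div_eq_mul_inv, pow_one]; rfl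

private lemma tendsto_exp_neg {q : ℂ} (hq : Complex.exp (-q) = -1) :
    Tendsto (fun z : ℂ => Complex.exp (-z)) (𝓝[≠] q) (𝓝 (-1)) := by
  rw [← hq]
  exact ((Complex.continuous_exp.comp continuous_neg).tendsto q).mono_left nhdsWithin_le_nhds

private lemma tendsto_pole2 {q : ℂ} (hq : Complex.exp (-q) = -1) :
    Tendsto (fun z => (z - q) ^ 2 * sig1 z) (𝓝[≠] q) (𝓝 (-1)) := by
  have h := (tendsto_exp_neg hq).mul ((tendsto_slope_inv hq).pow 2)
  have hv : (-1 : ℂ) * 1 ^ 2 = -1 := by ring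
  rw [hv] at h
  exact h.congr fun z => by simp only [sig1, div_pow]; ring

private lemma tendsto_pole3 {q : ℂ} (hq : Complex.exp (-q) = -1) :
    Tendsto (fun z => (z - q) ^ 3 * sig2 z) (𝓝[≠] q) (𝓝 2) := by
  have hsub : Tendsto (fun z : ℂ => Complex.exp (-z) - 1) (𝓝[≠] q) (𝓝 (-1 - 1)) :=
    (tendsto_exp_neg hq).sub tendsto_const_nhds
  have h := ((tendsto_exp_neg hq).mul hsub).mul ((tendsto_slope_inv hq).pow 3)
  have hv : (-1 : ℂ) * (-1 - 1) * 1 ^ 3 = 2 := by ring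
  rw [hv] at h
  exact h.congr fun z => by simp only [sig2, div_pow]; ring

private lemma tendsto_affine {m b p : ℂ} (hm : m ≠ 0) :
    Tendsto (fun u => m * u + b) (𝓝[≠] p) (𝓝[≠] (m * p + b)) := by
  refine tendsto_nhdsWithin_iff.mpr ⟨?_, ?_⟩
  · exact (((continuous_const.mul continuous_id).add continuous_const).tendsto p).mono_left
      nhdsWithin_le_nhds
  · filter_upwards [self_mem_nhdsWithin] with u hu
    simp only [Set.mem_compl_iff, Set.mem_singleton_iff] at hu ⊢
    intro hcon
    have h2 : m * u = m * p := by linear_combination hcon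
    exact hu (mul_left_cancel₀ hm h2)

private lemma tendsto_comp_pole {m b p : ℂ} (hm : m ≠ 0) {B : ℂ → ℂ} {κ : ℂ} (s : ℕ)
    (hB : Tendsto (fun z => (z - (m * p + b)) ^ s * B z) (𝓝[≠] (m * p + b)) (𝓝 κ)) :
    Tendsto (fun u => (u - p) ^ s * B (m * u + b)) (𝓝[≠] p) (𝓝 ((m⁻¹) ^ s * κ)) := by
  have h := (hB.comp (tendsto_affine hm)).const_mul ((m⁻¹) ^ s)
  refine h.congr fun u => ?_
  show (m⁻¹) ^ s * ((m * u + b - (m * p + b)) ^ s * B (m * u + b))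
      = (u - p) ^ s * B (m * u + b)
  have e : m * u + b - (m * p + b) = m * (u - p) := by ring
  rw [e, mul_pow, ← mul_assoc, ← mul_assoc, inv_pow, inv_mul_cancel₀ (pow_ne_zero s hm), one_mul]

private lemma tendsto_aux_pole {p : ℂ} {g : ℂ → ℂ} {κ : ℂ} {s : ℕ}
    (hg : Tendsto (fun u => (u - p) ^ s * g u) (𝓝[≠] p) (𝓝 κ))
    {c : ℂ → ℂ} (hc : Continuous c) {d : ℕ} (hsd : s ≤ d) :
    Tendsto (fun u => (u - p) ^ d * (c u * g u)) (𝓝[≠] p)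
      (𝓝 (if d = s then c p * κ else 0)) := by
  have h1 : Tendsto c (𝓝[≠] p) (𝓝 (c p)) := (hc.tendsto p).mono_left nhdsWithin_le_nhds
  have h2 : Tendsto (fun u : ℂ => (u - p) ^ (d - s)) (𝓝[≠] p) (𝓝 ((p - p) ^ (d - s))) :=
    (((continuous_id.sub continuous_const).pow _).tendsto p).mono_left nhdsWithin_le_nhds
  have h3 := (h1.mul h2).mul hg
  have heq : ∀ u : ℂ, c u * (u - p) ^ (d - s) * ((u - p) ^ s * g u)
      = (u - p) ^ d * (c u * g u) := by
    intro u
    have hp : (u - p) ^ (d - s) * (u - p) ^ s = (u - p) ^ d := by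
      rw [← pow_add, Nat.sub_add_cancel hsd]
    calc c u * (u - p) ^ (d - s) * ((u - p) ^ s * g u)
        = (u - p) ^ (d - s) * (u - p) ^ s * (c u * g u) := by ring
      _ = (u - p) ^ d * (c u * g u) := by rw [hp]
  have h4 := h3.congr heq
  rcases eq_or_lt_of_le hsd with rfl | hlt
  · simpa using h4
  · have hz : (p - p) ^ (d - s) = 0 := by
      rw [sub_self]
      exact zero_pow (Nat.sub_ne_zero_of_lt hlt)
    rw [hz] at h4
    simp only [mul_zero, zero_mul] at h4
    rw [if_neg (by omega)]
    exact h4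

private lemma tendsto_aux_cont {p : ℂ} {g : ℂ → ℂ} (hg : ContinuousAt g p)
    {c : ℂ → ℂ} (hc : Continuous c) {d : ℕ} (hd : d ≠ 0) :
    Tendsto (fun u => (u - p) ^ d * (c u * g u)) (𝓝[≠] p) (𝓝 0) := by
  have h1 : Tendsto (fun u : ℂ => (u - p) ^ d * (c u * g u)) (𝓝 p)
      (𝓝 ((p - p) ^ d * (c p * g p))) :=
    (((continuous_id.sub continuous_const).pow d).continuousAt).mul (hc.continuousAt.mul hg)
  have hz : (p - p) ^ d * (c p * g p) = 0 := by
    rw [sub_self, zero_pow hd, zero_mul]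
  exact (hz ▸ h1).mono_left nhdsWithin_le_nhds

private lemma limit_eq_zero {p L : ℂ} {F : ℂ → ℂ}
    (hzero : ∀ᶠ u in 𝓝[≠] p, F u = 0)
    (hlim : Tendsto F (𝓝[≠] p) (𝓝 L)) : L = 0 :=
  tendsto_nhds_unique (hlim.congr' (hzero.mono fun _ h => h)) tendsto_const_nhds
private lemma eventually_mem_D {k : ℕ} {m b : Fin k → ℂ} (hm : ∀ i, m i ≠ 0)
    {S : Fin k → Set ℂ}
    (hS : ∀ i, S i = {u : ℂ | Complex.exp (-(m i * u + b i)) = -1})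
    (hdisj : ∀ i j, i ≠ j → Disjoint (S i) (S j))
    (i : Fin k) {p : ℂ} (hp : p ∈ S i) :
    ∀ᶠ u in 𝓝[≠] p, u ∈ (⋃ j, S j)ᶜ := by
  have hall : ∀ j, ∀ᶠ u in 𝓝[≠] p, u ∉ S j := by
    intro j
    by_cases hji : j = i
    · subst hji
      have hq : Complex.exp (-(m j * p + b j)) = -1 := by rw [hS j] at hp; exact hp
      have habs : 0 < ‖m j‖ := by
        simpa [norm_pos_iff] using hm j
      have hrpos : 0 < 2 * Real.pi / ‖m j‖ := by
        have := Real.pi_pos; positivity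
      have hball : Metric.ball p (2 * Real.pi / ‖m j‖) ∈ 𝓝[≠] p :=
        mem_nhdsWithin_of_mem_nhds (Metric.ball_mem_nhds p hrpos)
      filter_upwards [hball, self_mem_nhdsWithin] with u hu hune
      intro huS
      rw [hS j] at huS
      have hz : Complex.exp (-(m j * u + b j)) = -1 := huS
      have hune' : u ≠ p := hune
      have hne : m j * u + b j ≠ m j * p + b j := by
        intro hcon
        have h2 : m j * u = m j * p := by linear_combination hcon
        exact hune' (mul_left_cancel₀ (hm j) h2)
      have hdist := pole_dist hz hq hne
      rw [Complex.dist_eq] at hdist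
      have e : m j * u + b j - (m j * p + b j) = m j * (u - p) := by ring
      rw [e, norm_mul] at hdist
      have hlt : ‖u - p‖ < 2 * Real.pi / ‖m j‖ := by
        rw [Metric.mem_ball, Complex.dist_eq] at hu
        exact hu
      have := (lt_div_iff₀ habs).mp hlt
      nlinarith
    · have hclosed : IsClosed (S j) := by
        rw [hS j]
        exact isClosed_singleton.preimage (by continuity :
          Continuous fun u : ℂ => Complex.exp (-(m j * u + b j)))
      have hpnot : p ∉ S j := fun hmem => Set.disjoint_left.mp (hdisj j i hji) hmem hp
      filter_upwards [mem_nhdsWithin_of_mem_nhds (hclosed.isOpen_compl.mem_nhds hpnot)]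
        with u hu using hu
  filter_upwards [Filter.eventually_all.mpr hall] with u hu
  simp only [Set.mem_compl_iff, Set.mem_iUnion, not_exists]
  exact hu
private lemma stage_limit {k : ℕ} {m b : Fin k → ℂ} (hm : ∀ i, m i ≠ 0)
    {S : Fin k → Set ℂ}
    (hS : ∀ i, S i = {u : ℂ | Complex.exp (-(m i * u + b i)) = -1})
    (hdisj : ∀ i j, i ≠ j → Disjoint (S i) (S j))
    (c1 c2 c3 : Fin k → ℂ → ℂ)
    (hc1 : ∀ j, Continuous (c1 j)) (hc2 : ∀ j, Continuous (c2 j))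
    (hc3 : ∀ j, Continuous (c3 j)) (α₀ : ℂ)
    (hvan : ∀ u ∈ (⋃ j, S j)ᶜ,
      α₀ + (∑ j, c1 j u * csigmoid (m j * u + b j))
        + (∑ j, c2 j u * sig1 (m j * u + b j))
        + (∑ j, c3 j u * sig2 (m j * u + b j)) = 0)
    (i : Fin k) {p : ℂ} (hp : p ∈ S i)
    (d : ℕ) (hd1 : 1 ≤ d)
    (h2 : d < 2 → c2 i = 0) (h3 : d < 3 → c3 i = 0) :
    (if d = 1 then c1 i p * ((m i)⁻¹ ^ 1 * 1) else 0)
      + (if d = 2 then c2 i p * ((m i)⁻¹ ^ 2 * (-1)) else 0)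
      + (if d = 3 then c3 i p * ((m i)⁻¹ ^ 3 * 2) else 0) = 0 := by
  have hq : Complex.exp (-(m i * p + b i)) = -1 := by rw [hS i] at hp; exact hp
  have hpnot : ∀ j, j ≠ i → p ∉ S j := fun j hji hmem =>
    Set.disjoint_left.mp (hdisj j i hji) hmem hp
  have hne : ∀ j, j ≠ i → 1 + Complex.exp (-(m j * p + b j)) ≠ 0 := by
    intro j hji h0
    apply hpnot j hji
    rw [hS j]
    show Complex.exp (-(m j * p + b j)) = -1
    linear_combination h0
  have haff : ∀ j, Continuous fun u : ℂ => m j * u + b j := fun j => by continuity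
  have hd0 : d ≠ 0 := by omega
  -- pole-side limits
  have hP1 : Tendsto (fun u => (u - p) ^ 1 * csigmoid (m i * u + b i)) (𝓝[≠] p)
      (𝓝 ((m i)⁻¹ ^ 1 * 1)) := tendsto_comp_pole (hm i) 1 (tendsto_pole1 hq)
  have hP2 : Tendsto (fun u => (u - p) ^ 2 * sig1 (m i * u + b i)) (𝓝[≠] p)
      (𝓝 ((m i)⁻¹ ^ 2 * (-1))) := tendsto_comp_pole (hm i) 2 (tendsto_pole2 hq)
  have hP3 : Tendsto (fun u => (u - p) ^ 3 * sig2 (m i * u + b i)) (𝓝[≠] p)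
      (𝓝 ((m i)⁻¹ ^ 3 * 2)) := tendsto_comp_pole (hm i) 3 (tendsto_pole3 hq)
  -- head term
  have hhead : Tendsto (fun u : ℂ => (u - p) ^ d * α₀) (𝓝[≠] p) (𝓝 0) := by
    have := tendsto_aux_cont (p := p) (g := fun _ : ℂ => (1 : ℂ)) continuousAt_const
      (c := fun _ : ℂ => α₀) continuous_const hd0
    simpa using this
  -- sum 1
  have hsum1 : Tendsto (fun u => ∑ j, (u - p) ^ d * (c1 j u * csigmoid (m j * u + b j)))
      (𝓝[≠] p) (𝓝 (∑ j, if j = i then (if d = 1 then c1 i p * ((m i)⁻¹ ^ 1 * 1) else 0)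
        else 0)) := by
    apply tendsto_finset_sum
    intro j _
    by_cases hji : j = i
    · subst hji
      simpa using tendsto_aux_pole hP1 (hc1 j) hd1
    · have hgc : ContinuousAt (fun u => csigmoid (m j * u + b j)) p :=
        ContinuousAt.comp (g := csigmoid) (f := fun u : ℂ => m j * u + b j) (x := p)
          (continuousAt_csigmoid (hne j hji)) ((haff j).continuousAt)
      simpa [hji] using tendsto_aux_cont hgc (hc1 j) hd0
  -- sum 2
  have hsum2 : Tendsto (fun u => ∑ j, (u - p) ^ d * (c2 j u * sig1 (m j * u + b j)))
      (𝓝[≠] p) (𝓝 (∑ j, if j = i then (if d = 2 then c2 i p * ((m i)⁻¹ ^ 2 * (-1)) else 0)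
        else 0)) := by
    apply tendsto_finset_sum
    intro j _
    by_cases hji : j = i
    · subst hji
      by_cases hd2 : 2 ≤ d
      · simpa using tendsto_aux_pole hP2 (hc2 j) hd2
      · have hc0 : c2 j = 0 := h2 (by omega)
        have hzero : ∀ u : ℂ, (u - p) ^ d * (c2 j u * sig1 (m j * u + b j)) = 0 := by
          intro u; rw [hc0]; simp
        have h0 : Tendsto (fun u : ℂ => (u - p) ^ d * (c2 j u * sig1 (m j * u + b j)))
            (𝓝[≠] p) (𝓝 0) := tendsto_const_nhds.congr fun u => (hzero u).symm
        simpa [show d ≠ 2 by omega] using h0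
    · have hgc : ContinuousAt (fun u => sig1 (m j * u + b j)) p :=
        ContinuousAt.comp (g := sig1) (f := fun u : ℂ => m j * u + b j) (x := p)
          (continuousAt_sig1 (hne j hji)) ((haff j).continuousAt)
      simpa [hji] using tendsto_aux_cont hgc (hc2 j) hd0
  -- sum 3
  have hsum3 : Tendsto (fun u => ∑ j, (u - p) ^ d * (c3 j u * sig2 (m j * u + b j)))
      (𝓝[≠] p) (𝓝 (∑ j, if j = i then (if d = 3 then c3 i p * ((m i)⁻¹ ^ 3 * 2) else 0)
        else 0)) := by
    apply tendsto_finset_sum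
    intro j _
    by_cases hji : j = i
    · subst hji
      by_cases hd3 : 3 ≤ d
      · simpa using tendsto_aux_pole hP3 (hc3 j) hd3
      · have hc0 : c3 j = 0 := h3 (by omega)
        have hzero : ∀ u : ℂ, (u - p) ^ d * (c3 j u * sig2 (m j * u + b j)) = 0 := by
          intro u; rw [hc0]; simp
        have h0 : Tendsto (fun u : ℂ => (u - p) ^ d * (c3 j u * sig2 (m j * u + b j)))
            (𝓝[≠] p) (𝓝 0) := tendsto_const_nhds.congr fun u => (hzero u).symm
        simpa [show d ≠ 3 by omega] using h0
    · have hgc : ContinuousAt (fun u => sig2 (m j * u + b j)) p :=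
        ContinuousAt.comp (g := sig2) (f := fun u : ℂ => m j * u + b j) (x := p)
          (continuousAt_sig2 (hne j hji)) ((haff j).continuousAt)
      simpa [hji] using tendsto_aux_cont hgc (hc3 j) hd0
  -- assemble
  have htotal : Tendsto (fun u => (u - p) ^ d *
      (α₀ + (∑ j, c1 j u * csigmoid (m j * u + b j))
        + (∑ j, c2 j u * sig1 (m j * u + b j))
        + (∑ j, c3 j u * sig2 (m j * u + b j)))) (𝓝[≠] p)
      (𝓝 ((0 + (∑ j, if j = i then (if d = 1 then c1 i p * ((m i)⁻¹ ^ 1 * 1) else 0) else 0)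
        + (∑ j, if j = i then (if d = 2 then c2 i p * ((m i)⁻¹ ^ 2 * (-1)) else 0) else 0))
        + (∑ j, if j = i then (if d = 3 then c3 i p * ((m i)⁻¹ ^ 3 * 2) else 0) else 0))) := by
    refine (((hhead.add hsum1).add hsum2).add hsum3).congr fun u => ?_
    rw [mul_add, mul_add, mul_add, Finset.mul_sum, Finset.mul_sum, Finset.mul_sum]
  have hev : ∀ᶠ u in 𝓝[≠] p, (u - p) ^ d *
      (α₀ + (∑ j, c1 j u * csigmoid (m j * u + b j))
        + (∑ j, c2 j u * sig1 (m j * u + b j))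
        + (∑ j, c3 j u * sig2 (m j * u + b j))) = 0 := by
    filter_upwards [eventually_mem_D hm hS hdisj i hp] with u hu
    rw [hvan u hu, mul_zero]
  have hfin := limit_eq_zero hev htotal
  simpa [Finset.sum_ite_eq'] using hfin
/-- If `m₁, …, m_k ≠ 0`, `Sᵢ = {((2n+1)π√-1 - bᵢ)/mᵢ : n ∈ ℤ}` are pairwise disjoint, and a
linear combination `α₀ + ∑ αᵢ σ(mᵢu + bᵢ) + ∑ (εᵢ + βᵢu) σ'(mᵢu + bᵢ)
+ ∑ (δᵢ + γᵢu²) σ''(mᵢu + bᵢ)` vanishes on `D = ℂ \ (S₁ ∪ ⋯ ∪ S_k)`, then all the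
coefficients vanish. -/
theorem csigmoid_combination_eq_zero (k : ℕ) (m b : Fin k → ℂ) (hm : ∀ i, m i ≠ 0)
    (S : Fin k → Set ℂ)
    (hS : ∀ i, S i =
      {z : ℂ | ∃ n : ℤ, z = ((2 * (n : ℂ) + 1) * Real.pi * Complex.I - b i) / m i})
    (hdisj : ∀ i j, i ≠ j → Disjoint (S i) (S j))
    (α₀ : ℂ) (α ε β δ γ : Fin k → ℂ)
    (h : ∀ u ∈ (⋃ i, S i)ᶜ,
      α₀ + (∑ i : Fin k, α i * csigmoid (m i * u + b i))
        + (∑ i : Fin k, (ε i + β i * u) * deriv csigmoid (m i * u + b i))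
        + (∑ i : Fin k, (δ i + γ i * u ^ 2) * deriv (deriv csigmoid) (m i * u + b i)) = 0) :
    α₀ = 0 ∧ ∀ i, α i = 0 ∧ ε i = 0 ∧ β i = 0 ∧ δ i = 0 ∧ γ i = 0 := by
  have hS' : ∀ i, S i = {u : ℂ | Complex.exp (-(m i * u + b i)) = -1} := by
    intro i
    rw [hS i]
    ext u
    simp only [Set.mem_setOf_eq]
    rw [exp_neg_eq_neg_one_iff]
    constructor
    · rintro ⟨n, rfl⟩
      refine ⟨n, ?_⟩
      field_simp [hm i]
      ring
    · rintro ⟨n, hn⟩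
      refine ⟨n, ?_⟩
      rw [← hn]
      field_simp [hm i]
      ring
  -- D reformulation to sig1/sig2
  have hne_of_D : ∀ u, u ∈ (⋃ j, S j)ᶜ → ∀ j, 1 + Complex.exp (-(m j * u + b j)) ≠ 0 := by
    intro u hu j h0
    exact hu (Set.mem_iUnion.mpr ⟨j, by
      rw [hS' j]
      show Complex.exp (-(m j * u + b j)) = -1
      linear_combination h0⟩)
  have hG : ∀ u ∈ (⋃ j, S j)ᶜ,
      α₀ + (∑ i : Fin k, α i * csigmoid (m i * u + b i))
        + (∑ i : Fin k, (ε i + β i * u) * sig1 (m i * u + b i))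
        + (∑ i : Fin k, (δ i + γ i * u ^ 2) * sig2 (m i * u + b i)) = 0 := by
    intro u hu
    have e1 : (∑ i : Fin k, (ε i + β i * u) * deriv csigmoid (m i * u + b i))
        = ∑ i : Fin k, (ε i + β i * u) * sig1 (m i * u + b i) :=
      Finset.sum_congr rfl fun j _ => by rw [deriv_csigmoid_eq (hne_of_D u hu j)]
    have e2 : (∑ i : Fin k, (δ i + γ i * u ^ 2) * deriv (deriv csigmoid) (m i * u + b i))
        = ∑ i : Fin k, (δ i + γ i * u ^ 2) * sig2 (m i * u + b i) :=
      Finset.sum_congr rfl fun j _ => by rw [deriv2_csigmoid_eq (hne_of_D u hu j)]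
    rw [← e1, ← e2]
    exact h u hu
  -- pole points
  set P : Fin k → ℤ → ℂ :=
    fun i n => ((2 * (n : ℂ) + 1) * Real.pi * Complex.I - b i) / m i with hPdef
  have hpmem : ∀ i (n : ℤ), P i n ∈ S i := by
    intro i n
    rw [hS i]
    exact ⟨n, rfl⟩
  have hpinj : ∀ i, Function.Injective (P i) := by
    intro i n n' hnn
    have h1 := congrArg (fun x : ℂ => x * m i) hnn
    simp only [hPdef, div_mul_cancel₀ _ (hm i)] at h1
    have h2 : (2 * (n : ℂ) + 1) * Real.pi * Complex.I
        = (2 * (n' : ℂ) + 1) * Real.pi * Complex.I := by linear_combination h1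
    have h3 := mul_right_cancel₀ Complex.I_ne_zero h2
    have h4 := mul_right_cancel₀
      (by exact_mod_cast Real.pi_ne_zero : (Real.pi : ℂ) ≠ 0) h3
    have h5 : (n : ℂ) = (n' : ℂ) := by linear_combination h4 / 2
    exact_mod_cast h5
  have hmne : ∀ i, (m i)⁻¹ ≠ 0 := fun i => inv_ne_zero (hm i)
  -- Stage 3 : coefficients of σ''
  have key3 : ∀ i (n : ℤ), δ i + γ i * (P i n) ^ 2 = 0 := by
    intro i n
    have hst := stage_limit hm hS' hdisj (fun j _ => α j) (fun j u => ε j + β j * u)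
      (fun j u => δ j + γ j * u ^ 2) (fun j => continuous_const)
      (fun j => by fun_prop) (fun j => by fun_prop) α₀ hG i (hpmem i n) 3 (by omega)
      (fun hcon => absurd hcon (by omega)) (fun hcon => absurd hcon (by omega))
    norm_num at hst
    rcases hst with hst | hst
    · exact hst
    · exact absurd hst (hm i)
  have hγδ : ∀ i, γ i = 0 ∧ δ i = 0 := by
    intro i
    have h0 := key3 i 0
    have h1 := key3 i 1
    have h2 := key3 i 2
    have hne01 : P i 0 ≠ P i 1 := fun hcon => by
      have := hpinj i hcon; norm_num at this
    have hne02 : P i 0 ≠ P i 2 := fun hcon => by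
      have := hpinj i hcon; norm_num at this
    have hne12 : P i 1 ≠ P i 2 := fun hcon => by
      have := hpinj i hcon; norm_num at this
    have hγ : γ i = 0 := by
      by_contra hγ
      have e1 : P i 0 ^ 2 = P i 1 ^ 2 := by
        have hsub : γ i * (P i 0 ^ 2 - P i 1 ^ 2) = 0 := by linear_combination h0 - h1
        have := (mul_eq_zero.mp hsub).resolve_left hγ
        linear_combination this
      have e2 : P i 0 ^ 2 = P i 2 ^ 2 := by
        have hsub : γ i * (P i 0 ^ 2 - P i 2 ^ 2) = 0 := by linear_combination h0 - h2
        have := (mul_eq_zero.mp hsub).resolve_left hγ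
        linear_combination this
      have f1 : P i 1 = -P i 0 := by
        have hz : (P i 1 - P i 0) * (P i 1 + P i 0) = 0 := by linear_combination -e1
        rcases mul_eq_zero.mp hz with hA | hB
        · exact absurd (sub_eq_zero.mp hA) hne01.symm
        · linear_combination hB
      have f2 : P i 2 = -P i 0 := by
        have hz : (P i 2 - P i 0) * (P i 2 + P i 0) = 0 := by linear_combination -e2
        rcases mul_eq_zero.mp hz with hA | hB
        · exact absurd (sub_eq_zero.mp hA) hne02.symm
        · linear_combination hB
      exact hne12 (f1.trans f2.symm)
    refine ⟨hγ, ?_⟩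
    have := key3 i 0
    rw [hγ] at this
    simpa using this
  -- Stage 2 : coefficients of σ'
  have key2 : ∀ i (n : ℤ), ε i + β i * P i n = 0 := by
    intro i n
    have hc3 : (fun u : ℂ => δ i + γ i * u ^ 2) = 0 := by
      funext u
      rw [(hγδ i).1, (hγδ i).2]
      simp
    have hst := stage_limit hm hS' hdisj (fun j _ => α j) (fun j u => ε j + β j * u)
      (fun j u => δ j + γ j * u ^ 2) (fun j => continuous_const)
      (fun j => by fun_prop) (fun j => by fun_prop) α₀ hG i (hpmem i n) 2 (by omega)
      (fun hcon => absurd hcon (by omega)) (fun _ => hc3)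
    norm_num at hst
    rcases hst with hst | hst
    · exact hst
    · exact absurd hst (hm i)
  have hεβ : ∀ i, β i = 0 ∧ ε i = 0 := by
    intro i
    have h0 := key2 i 0
    have h1 := key2 i 1
    have hne01 : P i 0 ≠ P i 1 := fun hcon => by
      have := hpinj i hcon; norm_num at this
    have hβ : β i = 0 := by
      have hsub : β i * (P i 0 - P i 1) = 0 := by linear_combination h0 - h1
      exact (mul_eq_zero.mp hsub).resolve_right (sub_ne_zero.mpr hne01)
    refine ⟨hβ, ?_⟩
    rw [hβ] at h0
    simpa using h0
  -- Stage 1 : coefficients of σ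
  have key1 : ∀ i, α i = 0 := by
    intro i
    have hc3 : (fun u : ℂ => δ i + γ i * u ^ 2) = 0 := by
      funext u
      rw [(hγδ i).1, (hγδ i).2]
      simp
    have hc2 : (fun u : ℂ => ε i + β i * u) = 0 := by
      funext u
      rw [(hεβ i).1, (hεβ i).2]
      simp
    have hst := stage_limit hm hS' hdisj (fun j _ => α j) (fun j u => ε j + β j * u)
      (fun j u => δ j + γ j * u ^ 2) (fun j => continuous_const)
      (fun j => by fun_prop) (fun j => by fun_prop) α₀ hG i (hpmem i 0) 1 (by omega)
      (fun _ => hc2) (fun _ => hc3)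
    norm_num at hst
    rcases hst with hst | hst
    · exact hst
    · exact absurd hst (hm i)
  -- Stage 0 : constant
  have hDne : ((⋃ j, S j)ᶜ : Set ℂ).Nonempty := by
    rw [Set.nonempty_compl]
    intro hcon
    have hc : (⋃ j, S j).Countable := Set.countable_iUnion fun j => by
      rw [hS j]
      have e : {z : ℂ | ∃ n : ℤ, z = ((2 * (n : ℂ) + 1) * Real.pi * Complex.I - b j) / m j}
          = Set.range fun n : ℤ =>
            ((2 * (n : ℂ) + 1) * Real.pi * Complex.I - b j) / m j := by
        ext z
        simp [Set.range, eq_comm]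
      rw [e]
      exact Set.countable_range _
    rw [hcon] at hc
    have : Countable ℂ := Set.countable_univ_iff.mp hc
    have : Countable ℝ := Function.Injective.countable Complex.ofReal_injective
    have h2 : (Set.univ : Set ℝ).Countable := Set.countable_univ
    exact Cardinal.not_countable_real h2
  obtain ⟨u₀, hu₀⟩ := hDne
  have hα₀ : α₀ = 0 := by
    have h0 := hG u₀ hu₀
    have hεi : ∀ i, ε i = 0 := fun i => (hεβ i).2
    have hβi : ∀ i, β i = 0 := fun i => (hεβ i).1
    have hδi : ∀ i, δ i = 0 := fun i => (hγδ i).2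
    have hγi : ∀ i, γ i = 0 := fun i => (hγδ i).1
    simp only [key1, hεi, hβi, hδi, hγi, zero_mul, mul_zero, add_zero, zero_add,
      Finset.sum_const_zero] at h0
    exact h0
  exact ⟨hα₀, fun i => ⟨key1 i, (hεβ i).2, (hεβ i).1, (hγδ i).2, (hγδ i).1⟩⟩

end
end
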